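/- Let d ≥ 2, let (r_μ, s_μ)_{μ=1}^d be pairs of positive integers with r₁/s₁ ≥ ... ≥ r_d/s_d and gcd(r_μ, s_μ) = 1 for all μ. Fix μ ∈ {1,...,d} and i′ ∈ {1,...,r_μ}, and set i = i′ + Σ_{ν<μ} r_ν and k = k′ − Σ_{ν<μ} s_ν with k′ ≥ −⌊s_μ(i′−1)/r_μ⌋ + [i′=1]. Then for any m ≥ 0, defining j = i + m r_μ (assumed ≤ Σ_ν r_ν) and l = k − m s_μ, writing j = j′ + Σ_{ν<λ} r_ν with j′ ∈ {1,...,r_λ} for the appropriate λ, one has l ≥ −⌊s_λ(j′−1)/r_λ⌋ − Σ_{ν<λ} s_ν + [j′=1]. -/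
import Mathlib


open Finset


private lemma aux_chain (rm sm rl sl S T x mm y : ℕ) (hrm : 0 < rm) (hrl : 0 < rl)
    (hord1 : rl * sm ≤ rm * sl) (hST : sm * S ≤ rm * T)
    (hxy : y + mm * rm = x + S) :
    sm * y / rm + mm * sm ≤ sl * x / rl + T := by
  have e1 : sm * y / rm + mm * sm = sm * (x + S) / rm := by
    rw [← hxy]
    have h : sm * (y + mm * rm) = sm * y + (mm * sm) * rm := by ring
    rw [h, Nat.add_mul_div_right _ _ hrm]
  have e2 : sm * (x + S) / rm ≤ sm * x / rm + T := by
    have h1 : sm * (x + S) ≤ sm * x + T * rm := by nlinarith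
    calc sm * (x + S) / rm ≤ (sm * x + T * rm) / rm := Nat.div_le_div_right h1
      _ = sm * x / rm + T := Nat.add_mul_div_right _ _ hrm
  have e3 : sm * x / rm ≤ sl * x / rl := by
    rw [Nat.le_div_iff_mul_le hrl]
    have h1 : sm * x / rm * rl * rm ≤ sm * x * rl := by
      have h := Nat.div_mul_le_self (sm * x) rm
      nlinarith
    have h3 : sm * x / rm * rl ≤ sm * x * rl / rm := by
      rw [Nat.le_div_iff_mul_le hrm]; exact h1
    have h2 : sm * x * rl ≤ sl * x * rm := by nlinarith
    calc sm * x / rm * rl ≤ sm * x * rl / rm := h3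
      _ ≤ sl * x * rm / rm := Nat.div_le_div_right h2
      _ = sl * x := Nat.mul_div_cancel _ hrm
  omega

private lemma aux_strict (rm sm S T mm y : ℕ) (hrm : 0 < rm) (hcop : Nat.Coprime rm sm)
    (hy1 : 1 ≤ y) (hy2 : y < rm) (hST : sm * S ≤ rm * T) (hS : y + mm * rm = S) :
    sm * y / rm + mm * sm + 1 ≤ T := by
  have hnd : ¬ rm ∣ sm * y := by
    intro hdvd
    have hc : rm ∣ y := hcop.dvd_of_dvd_mul_left hdvd
    have := Nat.le_of_dvd (by omega) hc
    omega
  have hlt : rm * (sm * y / rm) < sm * y := by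
    have h1 : rm * (sm * y / rm) ≤ sm * y := by
      rw [mul_comm]; exact Nat.div_mul_le_self _ _
    rcases h1.lt_or_eq with h | h
    · exact h
    · exact absurd ⟨_, h.symm⟩ hnd
  have hmul : rm * (sm * y / rm + mm * sm) < rm * T := by
    calc rm * (sm * y / rm + mm * sm) = rm * (sm * y / rm) + sm * (mm * rm) := by ring
      _ < sm * y + sm * (mm * rm) := by omega
      _ = sm * S := by rw [← hS]; ring
      _ ≤ rm * T := hST
  have := Nat.lt_of_mul_lt_mul_left hmul
  omega

/-- the forward (`m ≥ 0`) direction of the index-set rewriting lemma: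
if `(i,k)` lies above the threshold via the index-`μ` representation, then so does
`(j,l) = (i + m r_μ, k - m s_μ)` via its own decomposition. -/
theorem index_set_shift (d : ℕ) (hd : 2 ≤ d) (r s : ℕ → ℕ)
    (hpos : ∀ μ ∈ Finset.Icc 1 d, 0 < r μ ∧ 0 < s μ)
    (hord : ∀ μ ν, 1 ≤ μ → μ ≤ ν → ν ≤ d → r ν * s μ ≤ r μ * s ν)
    (hcop : ∀ μ ∈ Finset.Icc 1 d, Nat.Coprime (r μ) (s μ))
    (μ : ℕ) (hμ : μ ∈ Finset.Icc 1 d) (i' : ℕ) (hi' : i' ∈ Finset.Icc 1 (r μ))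
    (k' k : ℤ)
    (hk' : -((s μ * (i' - 1) / r μ : ℕ) : ℤ) + (if i' = 1 then 1 else 0) ≤ k')
    (hk : k = k' - ∑ ν ∈ Finset.Icc 1 (μ - 1), (s ν : ℤ))
    (i : ℕ) (hi : i = i' + ∑ ν ∈ Finset.Icc 1 (μ - 1), r ν)
    (m : ℕ) (j : ℕ) (hj : j = i + m * r μ)
    (hjle : j ≤ ∑ ν ∈ Finset.Icc 1 d, r ν)
    (l : ℤ) (hl : l = k - (m : ℤ) * (s μ : ℤ))
    (lam : ℕ) (hlam : lam ∈ Finset.Icc 1 d)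
    (j' : ℕ) (hj' : j' ∈ Finset.Icc 1 (r lam))
    (hdecomp : j = j' + ∑ ν ∈ Finset.Icc 1 (lam - 1), r ν) :
    -((s lam * (j' - 1) / r lam : ℕ) : ℤ) - (∑ ν ∈ Finset.Icc 1 (lam - 1), (s ν : ℤ)) +
        (if j' = 1 then 1 else 0) ≤ l := by

  obtain ⟨hμ1, hμd⟩ := Finset.mem_Icc.mp hμ
  obtain ⟨hi'1, hi'r⟩ := Finset.mem_Icc.mp hi'
  obtain ⟨hlam1, hlamd⟩ := Finset.mem_Icc.mp hlam
  obtain ⟨hj'1, hj'r⟩ := Finset.mem_Icc.mp hj'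
  obtain ⟨hrμ, hsμ⟩ := hpos μ hμ
  obtain ⟨hrl, hsl⟩ := hpos lam hlam
  have hIccμr : Finset.Icc 1 (μ - 1) = Finset.Ico 1 μ := by
    rw [← Finset.Ico_add_one_right_eq_Icc]; congr 1; omega
  have hIcclr : Finset.Icc 1 (lam - 1) = Finset.Ico 1 lam := by
    rw [← Finset.Ico_add_one_right_eq_Icc]; congr 1; omega
  rw [hIccμr] at hk hi
  rw [hIcclr] at hdecomp ⊢
  have hml : μ ≤ lam := by
    by_contra hcon
    push_neg at hcon
    have h2 : ∑ ν ∈ Finset.Ico 1 lam, r ν + r lam ≤ ∑ ν ∈ Finset.Ico 1 μ, r ν := by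
      have h3 := Finset.sum_Ico_succ_top hlam1 r
      have hsub : Finset.Ico 1 (lam + 1) ⊆ Finset.Ico 1 μ :=
        Finset.Ico_subset_Ico le_rfl (by omega)
      have h4 := Finset.sum_le_sum_of_subset (f := r) hsub
      omega
    omega
  set S := ∑ ν ∈ Finset.Ico μ lam, r ν with hSdef
  set T := ∑ ν ∈ Finset.Ico μ lam, s ν with hTdef
  have hsplitR : ∑ ν ∈ Finset.Ico 1 μ, r ν + S = ∑ ν ∈ Finset.Ico 1 lam, r ν :=
    Finset.sum_Ico_consecutive r hμ1 hml
  have hsplitT : ∑ ν ∈ Finset.Ico 1 μ, s ν + T = ∑ ν ∈ Finset.Ico 1 lam, s ν :=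
    Finset.sum_Ico_consecutive s hμ1 hml
  have hS : j' + S = i' + m * r μ := by omega
  have hST : s μ * S ≤ r μ * T := by
    rw [Finset.mul_sum, Finset.mul_sum]
    refine Finset.sum_le_sum fun ν hν => ?_
    obtain ⟨h1, h2⟩ := Finset.mem_Ico.mp hν
    rw [mul_comm (s μ) (r ν)]
    exact hord μ ν hμ1 h1 (by omega)
  have hsumZ : (∑ ν ∈ Finset.Ico 1 lam, (s ν : ℤ)) =
      (∑ ν ∈ Finset.Ico 1 μ, (s ν : ℤ)) + (T : ℤ) := by
    rw [← Nat.cast_sum, ← Nat.cast_sum, ← Nat.cast_add, hsplitT]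
  by_cases hj1 : j' = 1
  · rw [if_pos hj1]
    have hq3 : s lam * (j' - 1) / r lam = 0 := by
      rw [hj1]; simp
    rw [hq3, hsumZ, hl, hk]
    by_cases hi1 : i' = 1
    · rw [if_pos hi1] at hk'
      have hq1z : s μ * (i' - 1) / r μ = 0 := by rw [hi1]; simp
      rw [hq1z] at hk'
      have hSm : S = m * r μ := by omega
      have hT : m * s μ ≤ T := by
        have h : r μ * (m * s μ) ≤ r μ * T := by
          calc r μ * (m * s μ) = s μ * (m * r μ) := by ring
            _ = s μ * S := by rw [hSm]
            _ ≤ r μ * T := hST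
        exact Nat.le_of_mul_le_mul_left h hrμ
      have hTZ : (m : ℤ) * (s μ : ℤ) ≤ (T : ℤ) := by exact_mod_cast hT
      push_cast at hk' ⊢
      linarith
    · rw [if_neg hi1] at hk'
      have hkey := aux_strict (r μ) (s μ) S T m (i' - 1) hrμ (hcop μ hμ)
        (by omega) (by omega) hST (by omega)
      have hkeyZ : ((s μ * (i' - 1) / r μ : ℕ) : ℤ) + (m : ℤ) * (s μ : ℤ) + 1 ≤ (T : ℤ) := by
        exact_mod_cast hkey
      push_cast at hk' ⊢
      linarith
  · rw [if_neg hj1]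
    have hkey := aux_chain (r μ) (s μ) (r lam) (s lam) S T (j' - 1) m (i' - 1) hrμ hrl
      (hord μ lam hμ1 hml hlamd) hST (by omega)
    have hkeyZ : ((s μ * (i' - 1) / r μ : ℕ) : ℤ) + (m : ℤ) * (s μ : ℤ) ≤
        ((s lam * (j' - 1) / r lam : ℕ) : ℤ) + (T : ℤ) := by exact_mod_cast hkey
    have h0 : (0:ℤ) ≤ (if i' = 1 then (1:ℤ) else 0) := by split <;> norm_num
    rw [hsumZ, hl, hk]
    linarith
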